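/- Let (k, |·|) be a complete non-Archimedean field that is spherically complete, and let ℓ/k be an extension of non-Archimedean fields that is immediate (same value group and the induced residue field map is an isomorphism). Then ℓ = k. -/

import Mathlib

/-- A metric space is spherically complete if every decreasing sequence of closed
balls has nonempty intersection. -/
def SphericallyComplete (X : Type*) [MetricSpace X] : Prop :=
  ∀ (c : ℕ → X) (r : ℕ → ℝ), (∀ n, 0 ≤ r n) →
    (∀ n, Metric.closedBall (c (n + 1)) (r (n + 1)) ⊆ Metric.closedBall (c n) (r n)) →
    (⋂ n : ℕ, Metric.closedBall (c n) (r n)).Nonempty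

/-- A spherically complete non-Archimedean field admits no proper immediate extension:
if `ι : k → ℓ` is an isometric extension of non-Archimedean fields with the same value
group and surjective residue map, and `k` is spherically complete, then `ι` is
surjective, i.e. `ℓ = k`. -/
theorem immediate_extension_of_sphericallyComplete_is_trivial
    {k ℓ : Type*} [NontriviallyNormedField k] [NontriviallyNormedField ℓ]
    [IsUltrametricDist k] [IsUltrametricDist ℓ] [CompleteSpace k] [CompleteSpace ℓ]
    (ι : k →+* ℓ) (hisom : ∀ x : k, ‖ι x‖ = ‖x‖)
    (hsph : SphericallyComplete k)
    (hval : ∀ y : ℓ, y ≠ 0 → ∃ x : k, x ≠ 0 ∧ ‖ι x‖ = ‖y‖)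
    (hres : ∀ y : ℓ, ‖y‖ ≤ 1 → ∃ x : k, ‖x‖ ≤ 1 ∧ ‖y - ι x‖ < 1) :
    Function.Surjective ι := by
  intro y
  by_contra hy
  push_neg at hy
  -- every x can be improved
  have improve : ∀ x : k, ∃ x' : k, ‖y - ι x'‖ < ‖y - ι x‖ := by
    intro x
    have hz : y - ι x ≠ 0 := sub_ne_zero.mpr fun h => hy x h.symm
    obtain ⟨s, hs0, hs⟩ := hval (y - ι x) hz
    have hspos : 0 < ‖ι s‖ := by
      rw [hs]; exact norm_pos_iff.mpr hz
    have hιs : ι s ≠ 0 := norm_pos_iff.mp hspos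
    have hw : ‖(y - ι x) / ι s‖ = 1 := by
      rw [norm_div, hs, div_self (ne_of_gt (hs ▸ hspos))]
    obtain ⟨t, _, ht⟩ := hres ((y - ι x) / ι s) (le_of_eq hw)
    refine ⟨x + s * t, ?_⟩
    have key : y - ι (x + s * t) = ι s * ((y - ι x) / ι s - ι t) := by
      field_simp
      rw [map_add, map_mul]; ring
    rw [key, norm_mul]
    calc ‖ι s‖ * ‖(y - ι x) / ι s - ι t‖ < ‖ι s‖ * 1 := by
          exact mul_lt_mul_of_pos_left ht hspos
      _ = ‖y - ι x‖ := by rw [mul_one, hs]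
  set S : Set ℝ := Set.range fun x : k => ‖y - ι x‖ with hS
  have hSne : S.Nonempty := ⟨‖y - ι 0‖, 0, rfl⟩
  have hSbd : BddBelow S := ⟨0, by rintro _ ⟨x, rfl⟩; positivity⟩
  set δ : ℝ := sInf S with hδ
  have hδ_lt : ∀ x : k, δ < ‖y - ι x‖ := by
    intro x
    obtain ⟨x', hx'⟩ := improve x
    exact lt_of_le_of_lt (csInf_le hSbd ⟨x', rfl⟩) hx'
  -- recursive construction
  have step : ∀ (c : k) (n : ℕ), ∃ c' : k,
      ‖y - ι c'‖ < min ‖y - ι c‖ (δ + (1/2 : ℝ) ^ n) := by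
    intro c n
    have h1 : δ < min ‖y - ι c‖ (δ + (1/2 : ℝ) ^ n) := by
      refine lt_min (hδ_lt c) ?_
      have : (0:ℝ) < (1/2 : ℝ) ^ n := by positivity
      linarith
    obtain ⟨z, ⟨x', rfl⟩, hz⟩ := exists_lt_of_csInf_lt hSne h1
    exact ⟨x', hz⟩
  choose f hf using step
  let c : ℕ → k := fun n => Nat.rec 0 (fun n cn => f cn n) n
  have hc : ∀ n, c (n + 1) = f (c n) n := fun n => rfl
  set r : ℕ → ℝ := fun n => ‖y - ι (c n)‖ with hr
  have hrdec : ∀ n, r (n + 1) < r n := by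
    intro n
    have := hf (c n) n
    rw [← hc n] at this
    exact lt_of_lt_of_le this (min_le_left _ _)
  have hrsmall : ∀ n, r (n + 1) < δ + (1/2 : ℝ) ^ n := by
    intro n
    have := hf (c n) n
    rw [← hc n] at this
    exact lt_of_lt_of_le this (min_le_right _ _)
  have hrpos : ∀ n, 0 ≤ r n := fun n => norm_nonneg _
  have hnest : ∀ n, Metric.closedBall (c (n + 1)) (r (n + 1)) ⊆
      Metric.closedBall (c n) (r n) := by
    intro n z hz
    rw [Metric.mem_closedBall] at hz ⊢
    have hcd : dist (c (n + 1)) (c n) ≤ r n := by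
      rw [dist_eq_norm, ← hisom, map_sub]
      have h2 : ι (c (n + 1)) - ι (c n) = (y - ι (c n)) + -(y - ι (c (n + 1))) := by ring
      rw [h2]
      refine le_trans (IsUltrametricDist.norm_add_le_max _ _) ?_
      rw [norm_neg]
      exact max_le le_rfl (le_of_lt (hrdec n))
    calc dist z (c n) ≤ max (dist z (c (n + 1))) (dist (c (n + 1)) (c n)) :=
          IsUltrametricDist.dist_triangle_max _ _ _
      _ ≤ r n := max_le (le_trans hz (le_of_lt (hrdec n))) hcd
  obtain ⟨x, hx⟩ := hsph c r hrpos hnest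
  simp only [Set.mem_iInter, Metric.mem_closedBall] at hx
  -- ‖y - ι x‖ ≤ r n for all n
  have hle : ∀ n, ‖y - ι x‖ ≤ r n := by
    intro n
    have h1 : y - ι x = (y - ι (c n)) + (ι (c n) - ι x) := by ring
    rw [h1]
    refine le_trans (IsUltrametricDist.norm_add_le_max _ _) (max_le le_rfl ?_)
    rw [← map_sub, hisom, ← dist_eq_norm, dist_comm]
    exact hx n
  have hfinal : ‖y - ι x‖ ≤ δ := by
    refine le_of_forall_pos_le_add ?_
    intro ε hε
    obtain ⟨n, hn⟩ := exists_pow_lt_of_lt_one hε (by norm_num : (1/2 : ℝ) < 1)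
    calc ‖y - ι x‖ ≤ r (n + 1) := hle (n + 1)
      _ ≤ δ + (1/2 : ℝ) ^ n := le_of_lt (hrsmall n)
      _ ≤ δ + ε := by linarith
  exact absurd hfinal (not_le.mpr (hδ_lt x))
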